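/- Let M_1 = C[x1,x1^{-1}] \otimes C[x2,x3]/\mu^1[x2,x3] and let I_C \subset C[x1,x2,x3] be the monomial ideal of the T-fixed Cohen-Macaulay curve with outgoing partitions (\mu^1,\mu^2,\mu^3). Then there is no nonzero C[x1,x2,x3]-module homomorphism \phi: I_C \to M_1 that is homogeneous of T-weight (w,w,w) with w < 0 (i.e., \phi multiplies weights by (x1 x2 x3)^w for negative w). -/
import Mathlib

/-!
STATEMENT 8: With `M₁ = ℂ[x₁,x₁⁻¹] ⊗ ℂ[x₂,x₃]/μ¹[x₂,x₃]` and `I_C ⊆ ℂ[x₁,x₂,x₃]` the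
monomial ideal of the T-fixed Cohen-Macaulay curve with outgoing partitions
`(μ¹,μ²,μ³)`, there is no nonzero module homomorphism `φ : I_C → M₁` homogeneous of
T-weight `(w,w,w)` with `w < 0`.

Both `I_C` and `M₁` are multiplicity-free T-modules, with bases indexed by their
weights; a homomorphism of weight `(w,w,w)` is encoded by its coefficient function
`c : weights(I_C) → ℂ`, sending the basis monomial `x^a ∈ I_C` to
`c(a) · (basis vector of M₁ of weight a + (w,w,w))` (interpreted as `0` when the
target weight does not occur in `M₁`).  The hypothesis `hhom` is exactly
`φ(x_j · x^a) = x_j · φ(x^a)`, and the conclusion is `φ = 0`.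
-/

open scoped Classical

noncomputable section

/-- The standard basis weight vector `e_j ∈ ℤ³`. -/
def eZ (j : Fin 3) : Fin 3 → ℤ := fun i => if i = j then 1 else 0

/-- The standard basis exponent vector `e_j ∈ ℕ³`. -/
def eN (j : Fin 3) : Fin 3 → ℕ := fun i => if i = j then 1 else 0

/-- The monomial `x^a` lies in `I_C`: for each axis `i`, the cross-section exponents
lie outside the partition `μ i`. -/
def inIC (μ : Fin 3 → YoungDiagram) (a : Fin 3 → ℕ) : Prop :=
  ∀ i : Fin 3, (a (i + 1), a (i + 2)) ∉ μ i

/-- A weight `b ∈ ℤ³` occurs in `M₁` : the cross-section coordinates `(b₂,b₃)` are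
nonnegative and lie in the partition `μ 0`. -/
def inM1 (μ : Fin 3 → YoungDiagram) (b : Fin 3 → ℤ) : Prop :=
  0 ≤ b 1 ∧ 0 ≤ b 2 ∧ ((b 1).toNat, (b 2).toNat) ∈ μ 0

/-! ### Auxiliary lemmas -/

lemma PT_add_eN0 (x y z : ℕ) : (![x,y,z] : Fin 3 → ℕ) + eN 0 = ![x+1,y,z] := by
  funext i; fin_cases i <;> simp [eN]

lemma PT_add_eN1 (x y z : ℕ) : (![x,y,z] : Fin 3 → ℕ) + eN 1 = ![x,y+1,z] := by
  funext i; fin_cases i <;> simp [eN]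

lemma PT_add_eN2 (x y z : ℕ) : (![x,y,z] : Fin 3 → ℕ) + eN 2 = ![x,y,z+1] := by
  funext i; fin_cases i <;> simp [eN]

lemma PT_b (w : ℤ) (x y z : ℕ) :
    (fun i => (((![x,y,z] : Fin 3 → ℕ)) i : ℤ) + w) = ![(x:ℤ)+w, (y:ℤ)+w, (z:ℤ)+w] := by
  funext i; fin_cases i <;> simp

lemma PT_bZ0 (p q r : ℤ) : (![p,q,r] : Fin 3 → ℤ) + eZ 0 = ![p+1,q,r] := by
  funext i; fin_cases i <;> simp [eZ]

lemma PT_bZ1 (p q r : ℤ) : (![p,q,r] : Fin 3 → ℤ) + eZ 1 = ![p,q+1,r] := by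
  funext i; fin_cases i <;> simp [eZ]

lemma PT_bZ2 (p q r : ℤ) : (![p,q,r] : Fin 3 → ℤ) + eZ 2 = ![p,q,r+1] := by
  funext i; fin_cases i <;> simp [eZ]

lemma PT_inM1_vec (μ : Fin 3 → YoungDiagram) (p q r : ℤ) :
    inM1 μ ![p,q,r] ↔ 0 ≤ q ∧ 0 ≤ r ∧ (q.toNat, r.toNat) ∈ μ 0 := by
  simp [inM1]

lemma PT_inIC_iff (μ : Fin 3 → YoungDiagram) (a : Fin 3 → ℕ) :
    inIC μ a ↔ (a 1, a 2) ∉ μ 0 ∧ (a 2, a 0) ∉ μ 1 ∧ (a 0, a 1) ∉ μ 2 := by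
  constructor
  · intro h; exact ⟨by simpa using h 0, by simpa using h 1, by simpa using h 2⟩
  · rintro ⟨h0, h1, h2⟩ i; fin_cases i <;> simpa

lemma PT_notmem_mono {μ : YoungDiagram} {x y x' y' : ℕ} (hx : x ≤ x') (hy : y ≤ y')
    (h : (x, y) ∉ μ) : (x', y') ∉ μ := fun h' => h (μ.up_left_mem hx hy h')

/-- The main two-dimensional walk: if the first coordinate of the point is large enough
so that the cross-sections along axes 1 and 2 are automatically outside `μ 1`, `μ 2`,
then the coefficient vanishes. -/
lemma PT_main (μ : Fin 3 → YoungDiagram) (w : ℤ) (c : (Fin 3 → ℕ) → ℂ)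
    (hhom : ∀ a : Fin 3 → ℕ, inIC μ a → ∀ j : Fin 3,
      (if inM1 μ ((fun i => (a i : ℤ) + w) + eZ j) then c (a + eN j) else 0) =
      (if inM1 μ (fun i => (a i : ℤ) + w) ∧
          inM1 μ ((fun i => (a i : ℤ) + w) + eZ j) then c a else 0))
    (m : ℕ) (hm : w = -(m : ℤ)) (hm1 : 1 ≤ m)
    (a0 : ℕ) (ha1 : ∀ s, (s, a0) ∉ μ 1) (ha2 : ∀ t, (a0, t) ∉ μ 2) :
    ∀ t s : ℕ, m ≤ t → m ≤ s → (t, s) ∉ μ 0 → (t - m, s - m) ∈ μ 0 →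
      c ![a0, t, s] = 0 := by
  have hIC : ∀ t s : ℕ, (t, s) ∉ μ 0 → inIC μ ![a0, t, s] := by
    intro t s h
    rw [PT_inIC_iff]
    exact ⟨by simpa using h, by simpa using ha1 s, by simpa using ha2 t⟩
  intro t
  induction t using Nat.strong_induction_on with
  | _ t IH =>
  -- the "go down one step in the x₂-direction" move, including the kill at `t = m`
  have down : ∀ s : ℕ, m ≤ t → m ≤ s → (t - 1, s) ∉ μ 0 → (t - m, s - m) ∈ μ 0 →
      c ![a0, t, s] = 0 := by
    intro s ht hs hout htar
    have h := hhom ![a0, t - 1, s] (hIC _ _ hout) 1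
    rw [PT_add_eN1, PT_b, PT_bZ1] at h
    rw [show t - 1 + 1 = t from by omega] at h
    have hc1 : inM1 μ ![(a0:ℤ)+w, ((t-1:ℕ):ℤ)+w+1, (s:ℤ)+w] := by
      rw [PT_inM1_vec]
      refine ⟨by omega, by omega, ?_⟩
      rw [show (((t-1:ℕ):ℤ)+w+1).toNat = t - m from by omega,
        show ((s:ℤ)+w).toNat = s - m from by omega]
      exact htar
    rw [if_pos hc1] at h
    by_cases hteq : t = m
    · -- `t = m` : the source weight leaves `M₁`, so the coefficient is forced to vanish
      rw [if_neg] at h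
      · exact h
      · intro hcon
        have h1 := ((PT_inM1_vec μ _ _ _).1 hcon.1).1
        omega
    · -- `t > m` : both weights occur; move down and use the induction hypothesis
      rw [if_pos] at h
      · rw [h]
        refine IH (t-1) (by omega) s (by omega) hs hout ?_
        exact (μ 0).up_left_mem (by omega) le_rfl htar
      · refine ⟨?_, hc1⟩
        rw [PT_inM1_vec]
        refine ⟨by omega, by omega, ?_⟩
        rw [show (((t-1:ℕ):ℤ)+w).toNat = t - 1 - m from by omega,
          show ((s:ℤ)+w).toNat = s - m from by omega]
        exact (μ 0).up_left_mem (by omega) le_rfl htar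
  -- the upward walk in the x₃-direction, until the cell below is outside `μ 0`
  have up : ∀ d s : ℕ, (μ 0).rowLen (t-1) ≤ s + d → m ≤ t → m ≤ s → (t, s) ∉ μ 0 →
      (t - m, s - m) ∈ μ 0 → c ![a0, t, s] = 0 := by
    intro d
    induction d with
    | zero =>
      intro s hrl ht hs hout htar
      refine down s ht hs ?_ htar
      intro hmem
      rw [YoungDiagram.mem_iff_lt_rowLen] at hmem
      omega
    | succ d IHd =>
      intro s hrl ht hs hout htar
      by_cases hcor : (t-1, s) ∈ μ 0
      · -- stuck corner: move up, the target weight stays in `μ 0`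
        have hs1 : (t - m, s + 1 - m) ∈ μ 0 := (μ 0).up_left_mem (by omega) (by omega) hcor
        have h := hhom ![a0, t, s] (hIC _ _ hout) 2
        rw [PT_add_eN2, PT_b, PT_bZ2] at h
        have hc2 : inM1 μ ![(a0:ℤ)+w, (t:ℤ)+w, (s:ℤ)+w+1] := by
          rw [PT_inM1_vec]
          refine ⟨by omega, by omega, ?_⟩
          rw [show ((t:ℤ)+w).toNat = t - m from by omega,
            show ((s:ℤ)+w+1).toNat = s + 1 - m from by omega]
          exact hs1
        have hc0 : inM1 μ ![(a0:ℤ)+w, (t:ℤ)+w, (s:ℤ)+w] := by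
          rw [PT_inM1_vec]
          refine ⟨by omega, by omega, ?_⟩
          rw [show ((t:ℤ)+w).toNat = t - m from by omega,
            show ((s:ℤ)+w).toNat = s - m from by omega]
          exact htar
        rw [if_pos hc2, if_pos ⟨hc0, hc2⟩] at h
        rw [← h]
        have hrl' : (μ 0).rowLen (t-1) ≤ (s+1) + d := by
          rw [YoungDiagram.mem_iff_lt_rowLen] at hcor
          omega
        refine IHd (s+1) hrl' ht (by omega) (PT_notmem_mono le_rfl (by omega) hout) ?_
        rw [show s + 1 - m = s + 1 - m from rfl]
        exact hs1
      · exact down s ht hs hcor htar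
  intro s ht hs hout htar
  exact up ((μ 0).rowLen (t-1)) s (by omega) ht hs hout htar

theorem no_negative_weight_homomorphism
    (μ : Fin 3 → YoungDiagram) (w : ℤ) (hw : w < 0)
    (c : (Fin 3 → ℕ) → ℂ)
    (hhom : ∀ a : Fin 3 → ℕ, inIC μ a → ∀ j : Fin 3,
      (if inM1 μ ((fun i => (a i : ℤ) + w) + eZ j) then c (a + eN j) else 0) =
      (if inM1 μ (fun i => (a i : ℤ) + w) ∧
          inM1 μ ((fun i => (a i : ℤ) + w) + eZ j) then c a else 0)) :
    ∀ a : Fin 3 → ℕ, inIC μ a → inM1 μ (fun i => (a i : ℤ) + w) → c a = 0 := by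
  -- one step in the x₁-direction keeps the coefficient constant
  have step0 : ∀ x y z : ℕ, inIC μ ![x,y,z] →
      inM1 μ ![(x:ℤ)+w, (y:ℤ)+w, (z:ℤ)+w] → c ![x+1,y,z] = c ![x,y,z] := by
    intro x y z hic hM
    have h := hhom ![x,y,z] hic 0
    rw [PT_add_eN0, PT_b, PT_bZ0] at h
    have hM' : inM1 μ ![(x:ℤ)+w+1, (y:ℤ)+w, (z:ℤ)+w] := by
      rw [PT_inM1_vec] at hM ⊢; exact hM
    rw [if_pos hM', if_pos ⟨hM, hM'⟩] at h
    exact h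
  -- climbing `n` steps in the x₁-direction
  have mono0 : ∀ x y z : ℕ, inIC μ ![x,y,z] → inIC μ ![x+1,y,z] := by
    intro x y z hic
    rw [PT_inIC_iff] at hic ⊢
    refine ⟨by simpa using hic.1, ?_, ?_⟩
    · have := hic.2.1
      simp only [Matrix.cons_val_zero, Matrix.cons_val_one, Matrix.head_cons,
        Matrix.cons_val_two, Matrix.tail_cons] at this ⊢
      exact PT_notmem_mono le_rfl (by omega) this
    · have := hic.2.2
      simp only [Matrix.cons_val_zero, Matrix.cons_val_one, Matrix.head_cons,
        Matrix.cons_val_two, Matrix.tail_cons] at this ⊢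
      exact PT_notmem_mono (by omega) le_rfl this
  have climb : ∀ (n x y z : ℕ), inIC μ ![x,y,z] →
      inM1 μ ![(x:ℤ)+w, (y:ℤ)+w, (z:ℤ)+w] →
      c ![x+n,y,z] = c ![x,y,z] ∧ inIC μ ![x+n,y,z] := by
    intro n
    induction n with
    | zero => intro x y z hic hM; exact ⟨rfl, hic⟩
    | succ n IHn =>
      intro x y z hic hM
      obtain ⟨hc, hic'⟩ := IHn x y z hic hM
      have hM' : inM1 μ ![((x+n:ℕ):ℤ)+w, (y:ℤ)+w, (z:ℤ)+w] := by
        rw [PT_inM1_vec] at hM ⊢; exact hM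
      refine ⟨?_, mono0 _ _ _ hic'⟩
      rw [show x + (n+1) = (x+n)+1 from rfl, step0 (x+n) y z hic' hM', hc]
  intro a hic hMa
  -- normalize notation
  have hveq : a = ![a 0, a 1, a 2] := by funext i; fin_cases i <;> rfl
  set m : ℕ := (-w).toNat with hmdef
  have hm : w = -(m : ℤ) := by omega
  have hm1 : 1 ≤ m := by omega
  obtain ⟨h1, h2, h3⟩ := hMa
  have h1' : 0 ≤ (a 1 : ℤ) + w := h1
  have h2' : 0 ≤ (a 2 : ℤ) + w := h2
  have h3' : (a 1 - m, a 2 - m) ∈ μ 0 := by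
    have e1 : ((a 1 : ℤ) + w).toNat = a 1 - m := by omega
    have e2 : ((a 2 : ℤ) + w).toNat = a 2 - m := by omega
    rw [← e1, ← e2]
    exact h3
  have hMvec : inM1 μ ![(a 0:ℤ)+w, (a 1:ℤ)+w, (a 2:ℤ)+w] := by
    rw [PT_inM1_vec]; exact ⟨h1', h2', h3⟩
  have hicvec : inIC μ ![a 0, a 1, a 2] := by rw [← hveq]; exact hic
  have hout : (a 1, a 2) ∉ μ 0 := ((PT_inIC_iff μ a).1 hic).1
  -- make the first coordinate large
  set N : ℕ := (μ 1).rowLen 0 + (μ 2).colLen 0 with hNdef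
  have ha1 : ∀ s, (s, a 0 + N) ∉ μ 1 := by
    intro s hmem
    rw [YoungDiagram.mem_iff_lt_rowLen] at hmem
    have := (μ 1).rowLen_anti 0 s (Nat.zero_le s)
    omega
  have ha2 : ∀ t, (a 0 + N, t) ∉ μ 2 := by
    intro t hmem
    rw [YoungDiagram.mem_iff_lt_colLen] at hmem
    have := (μ 2).colLen_anti 0 t (Nat.zero_le t)
    omega
  obtain ⟨hc, -⟩ := climb N (a 0) (a 1) (a 2) hicvec hMvec
  rw [hveq, ← hc]
  exact PT_main μ w c hhom m hm hm1 (a 0 + N) ha1 ha2 (a 1) (a 2)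
    (by omega) (by omega) hout h3'

end
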